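/- For symmetric positive semidefinite matrices Σ₁, Σ₂ ∈ ℝ^{d×d}, the quantity tr[Σ₁ + Σ₂ − 2(Σ₁^{1/2} Σ₂ Σ₁^{1/2})^{1/2}] is nonnegative, and it equals zero when Σ₁ = Σ₂. -/

import Mathlib

namespace Matrix.PosSemidef

open scoped ComplexOrder

/-- The positive semidefinite square root of a positive semidefinite matrix
(restored: removed from Mathlib; definition as in Mathlib of December 2024). -/
noncomputable def sqrt {n 𝕜 : Type*} [Fintype n] [RCLike 𝕜] [DecidableEq n]
    {A : Matrix n n 𝕜} (hA : A.PosSemidef) : Matrix n n 𝕜 :=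
  hA.1.eigenvectorUnitary.1 * Matrix.diagonal ((↑) ∘ (Real.sqrt ∘ hA.1.eigenvalues)) *
    (star hA.1.eigenvectorUnitary : Matrix n n 𝕜)

end Matrix.PosSemidef

namespace Matrix.PosSemidef

open scoped ComplexOrder MatrixOrder

lemma sqrt_eq_cfcSqrt {n 𝕜 : Type*} [Fintype n] [RCLike 𝕜] [DecidableEq n]
    {A : Matrix n n 𝕜} (hA : A.PosSemidef) : hA.sqrt = CFC.sqrt A := by
  rw [CFC.sqrt_eq_cfc, cfc_nnreal_eq_real _ A, hA.1.cfc_eq]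
  simp only [Matrix.IsHermitian.cfc, sqrt, Unitary.conjStarAlgAut_apply]
  congr 3
  funext i
  simp [Real.coe_sqrt, Real.coe_toNNReal', max_eq_left (hA.eigenvalues_nonneg i)]

lemma posSemidef_sqrt {n 𝕜 : Type*} [Fintype n] [RCLike 𝕜] [DecidableEq n]
    {A : Matrix n n 𝕜} (hA : A.PosSemidef) : hA.sqrt.PosSemidef := by
  rw [sqrt_eq_cfcSqrt]; exact Matrix.nonneg_iff_posSemidef.mp (CFC.sqrt_nonneg A)

lemma sqrt_mul_self {n 𝕜 : Type*} [Fintype n] [RCLike 𝕜] [DecidableEq n]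
    {A : Matrix n n 𝕜} (hA : A.PosSemidef) : hA.sqrt * hA.sqrt = A := by
  rw [sqrt_eq_cfcSqrt]; exact CFC.sqrt_mul_sqrt_self A hA.nonneg

lemma eq_sqrt_of_sq_eq {n 𝕜 : Type*} [Fintype n] [RCLike 𝕜] [DecidableEq n]
    {A : Matrix n n 𝕜} (hA : A.PosSemidef) {B : Matrix n n 𝕜} (hB : B.PosSemidef)
    (hAB : A ^ 2 = B) : A = hB.sqrt := by
  rw [sqrt_eq_cfcSqrt, ← hAB, CFC.sqrt_sq A hA.nonneg]

end Matrix.PosSemidef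

open Matrix

section Aux

variable {d : ℕ}

private lemma stmt17_dot_nonneg (x : Fin d → ℝ) : 0 ≤ x ⬝ᵥ x :=
  Finset.sum_nonneg fun i _ => mul_self_nonneg _

private lemma stmt17_dot_amgm (x y : Fin d → ℝ) :
    x ⬝ᵥ y ≤ (x ⬝ᵥ x + y ⬝ᵥ y) / 2 := by
  have h := stmt17_dot_nonneg (x - y)
  rw [sub_dotProduct, dotProduct_sub, dotProduct_sub, dotProduct_comm y x] at h
  linarith

private lemma stmt17_symm_shift {M : Matrix (Fin d) (Fin d) ℝ} (hM : Mᵀ = M)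
    (x y : Fin d → ℝ) : (M *ᵥ x) ⬝ᵥ y = x ⬝ᵥ (M *ᵥ y) := by
  rw [dotProduct_mulVec x M y, ← mulVec_transpose, hM, dotProduct_comm]

private lemma stmt17_sum_dot (M W : Matrix (Fin d) (Fin d) ℝ) :
    ∑ i, (fun k => W k i) ⬝ᵥ (M *ᵥ fun k => W k i) = (Wᵀ * M * W).trace := by
  simp only [Matrix.trace, Matrix.diag, Matrix.mul_apply, Matrix.transpose_apply,
    dotProduct, Matrix.mulVec, Finset.sum_mul, Finset.mul_sum]
  refine Finset.sum_congr rfl fun i _ => ?_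
  rw [Finset.sum_comm]
  exact Finset.sum_congr rfl fun k _ => Finset.sum_congr rfl fun l _ => by ring

private lemma stmt17_trace_nonneg {M : Matrix (Fin d) (Fin d) ℝ} (hM : M.PosSemidef) :
    0 ≤ M.trace := by
  refine Finset.sum_nonneg fun i _ => ?_
  have := hM.diag_nonneg (i := i)
  simpa [dotProduct, Pi.single_apply, Matrix.mulVec, Finset.sum_ite_eq'] using this

end Aux

/-- For real symmetric positive semidefinite `S₁, S₂`, the quantity
`tr[S₁ + S₂ − 2(S₁^{1/2} S₂ S₁^{1/2})^{1/2}]` is nonnegative, and equals zero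
when `S₁ = S₂`. -/
theorem stmt17 {d : ℕ} (S₁ S₂ : Matrix (Fin d) (Fin d) ℝ)
    (h₁ : S₁.PosSemidef) (h₂ : S₂.PosSemidef)
    (hmid : (h₁.sqrt * S₂ * h₁.sqrt).PosSemidef) :
    0 ≤ (S₁ + S₂ - 2 • hmid.sqrt).trace
      ∧ (S₁ = S₂ → (S₁ + S₂ - 2 • hmid.sqrt).trace = 0) := by
  set A := h₁.sqrt with hAdef
  set B := h₂.sqrt with hBdef
  set T := hmid.sqrt with hTdef
  have hA : A.PosSemidef := h₁.posSemidef_sqrt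
  have hB : B.PosSemidef := h₂.posSemidef_sqrt
  have hT : T.PosSemidef := hmid.posSemidef_sqrt
  have hAt : Aᵀ = A := by
    rw [← Matrix.conjTranspose_eq_transpose_of_trivial]; exact hA.1
  have hBt : Bᵀ = B := by
    rw [← Matrix.conjTranspose_eq_transpose_of_trivial]; exact hB.1
  have hAA : A * A = S₁ := h₁.sqrt_mul_self
  have hBB : B * B = S₂ := h₂.sqrt_mul_self
  have hTT : T * T = A * S₂ * A := hmid.sqrt_mul_self
  have hH : T.IsHermitian := hT.1
  set lam := hH.eigenvalues with hlamdef
  have hlam0 : ∀ i, 0 ≤ lam i := hT.eigenvalues_nonneg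
  set V := (hH.eigenvectorUnitary : Matrix (Fin d) (Fin d) ℝ) with hVdef
  set v : Fin d → (Fin d → ℝ) := fun i => ⇑(hH.eigenvectorBasis i) with hvdef
  have hVcol : ∀ i, (fun k => V k i) = v i := by
    intro i; funext k; simp [hVdef, hvdef]
  have hVstar : star V = Vᵀ := by
    rw [Matrix.star_eq_conjTranspose, Matrix.conjTranspose_eq_transpose_of_trivial]
  have hV1 : Vᵀ * V = 1 := by
    rw [← hVstar]; exact Matrix.mem_unitaryGroup_iff'.mp hH.eigenvectorUnitary.2
  have hV2 : V * Vᵀ = 1 := by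
    rw [← hVstar]; exact Matrix.mem_unitaryGroup_iff.mp hH.eigenvectorUnitary.2
  have hvv : ∀ i j, v i ⬝ᵥ v j = if i = j then (1:ℝ) else 0 := by
    intro i j
    have := orthonormal_iff_ite.mp hH.eigenvectorBasis.orthonormal i j
    simpa [PiLp.inner_apply, RCLike.inner_apply, starRingEnd_apply, dotProduct,
      hvdef, mul_comm] using this
  have hTv : ∀ i, T *ᵥ v i = lam i • v i := fun i => hH.mulVec_eigenvectorBasis i
  -- trace of T
  have htrT : T.trace = ∑ i, lam i := by
    conv_lhs => rw [hH.spectral_theorem]; simp only [Unitary.conjStarAlgAut_apply, Unitary.coe_star]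
    rw [hVstar, Matrix.trace_mul_comm, ← Matrix.mul_assoc, hV1, one_mul]
    simp [Matrix.trace_diagonal, hlamdef]
  set w : Fin d → (Fin d → ℝ) := fun i => B *ᵥ (A *ᵥ v i) with hwdef
  have hww : ∀ i j, w i ⬝ᵥ w j = lam j ^ 2 * (v i ⬝ᵥ v j) := by
    intro i j
    rw [hwdef]
    rw [stmt17_symm_shift hBt, stmt17_symm_shift hAt, Matrix.mulVec_mulVec,
      Matrix.mulVec_mulVec, Matrix.mulVec_mulVec]
    have hABBA : A * B * B * A = T * T := by
      rw [hTT, ← hBB]; simp only [Matrix.mul_assoc]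
    rw [hABBA, ← Matrix.mulVec_mulVec, hTv j, Matrix.mulVec_smul, hTv j,
      dotProduct_smul, dotProduct_smul, smul_smul, smul_eq_mul, pow_two]
  set u : Fin d → (Fin d → ℝ) := fun i => if lam i = 0 then 0 else (lam i)⁻¹ • w i with hudef
  have key : ∀ i, lam i ≤ ((A *ᵥ v i) ⬝ᵥ (A *ᵥ v i) + (B *ᵥ u i) ⬝ᵥ (B *ᵥ u i)) / 2 := by
    intro i
    by_cases h : lam i = 0
    · rw [h]
      have := stmt17_dot_nonneg (A *ᵥ v i)
      have := stmt17_dot_nonneg (B *ᵥ u i)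
      linarith
    · have hlpos : 0 < lam i := lt_of_le_of_ne (hlam0 i) (Ne.symm h)
      have hui : u i = (lam i)⁻¹ • w i := by rw [hudef]; simp [h]
      have hval : (A *ᵥ v i) ⬝ᵥ (B *ᵥ u i) = lam i := by
        rw [hui, Matrix.mulVec_smul, dotProduct_smul, smul_eq_mul]
        have h1 : (A *ᵥ v i) ⬝ᵥ (B *ᵥ w i) = w i ⬝ᵥ w i := by
          rw [← stmt17_symm_shift hBt, hwdef, dotProduct_comm]
        rw [h1, hww i i, hvv i i, if_pos rfl, mul_one, pow_two,
          inv_mul_cancel_left₀ h]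
      calc lam i = (A *ᵥ v i) ⬝ᵥ (B *ᵥ u i) := hval.symm
        _ ≤ _ := stmt17_dot_amgm _ _
  -- sum over A v i
  have hsumA : ∑ i, (A *ᵥ v i) ⬝ᵥ (A *ᵥ v i) = S₁.trace := by
    have h1 : ∀ i, (A *ᵥ v i) ⬝ᵥ (A *ᵥ v i) = v i ⬝ᵥ (S₁ *ᵥ v i) := by
      intro i
      rw [stmt17_symm_shift hAt, Matrix.mulVec_mulVec, hAA]
    simp_rw [h1]
    have := stmt17_sum_dot S₁ V
    simp_rw [hVcol] at this
    rw [this, Matrix.trace_mul_comm, ← Matrix.mul_assoc, hV2, one_mul]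
  -- the projection argument
  set U : Matrix (Fin d) (Fin d) ℝ := Matrix.of (fun k i => u i k) with hUdef
  have hUcol : ∀ i, (fun k => U k i) = u i := fun i => rfl
  have huu : ∀ i j, u i ⬝ᵥ u j = if i = j then (if lam i = 0 then 0 else 1) else (0:ℝ) := by
    intro i j
    by_cases hi : lam i = 0
    · simp [hudef, hi, dotProduct]
    · by_cases hj : lam j = 0
      · have hij : i ≠ j := fun h => hi (h ▸ hj)
        simp [hudef, hj, hij, dotProduct]
      · rw [hudef]
        simp only [hi, hj, if_false]
        rw [smul_dotProduct, dotProduct_smul, hww i j, hvv i j]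
        by_cases hij : i = j
        · subst hij
          simp only [if_pos rfl, mul_one, smul_eq_mul]
          field_simp
          try ring
        · simp [hij]
  set E : Matrix (Fin d) (Fin d) ℝ := Matrix.diagonal (fun i => if lam i = 0 then 0 else 1) with hEdef
  have hUtU : Uᵀ * U = E := by
    ext i j
    rw [Matrix.mul_apply, hEdef, Matrix.diagonal_apply]
    have : ∑ k, Uᵀ i k * U k j = u i ⬝ᵥ u j := by
      simp [Matrix.transpose_apply, dotProduct, hUdef]
    rw [this, huu i j]
  have hUE : U * E = U := by
    ext k i
    rw [hEdef, Matrix.mul_diagonal]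
    by_cases hi : lam i = 0
    · simp [hi, hUdef, hudef]
    · simp [hi]
  set P : Matrix (Fin d) (Fin d) ℝ := U * Uᵀ with hPdef
  have hPP : P * P = P := by
    have h1 : P * P = U * (Uᵀ * U) * Uᵀ := by simp only [hPdef, Matrix.mul_assoc]
    rw [h1, hUtU, hUE]
  have hPt : Pᵀ = P := by
    rw [hPdef, Matrix.transpose_mul, Matrix.transpose_transpose]
  set Q : Matrix (Fin d) (Fin d) ℝ := 1 - P with hQdef
  have hQt : Qᵀ = Q := by rw [hQdef, Matrix.transpose_sub, Matrix.transpose_one, hPt]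
  have hQQ : Q * Q = Q := by
    rw [hQdef]
    rw [Matrix.sub_mul, Matrix.mul_sub, Matrix.mul_sub, hPP]
    simp only [Matrix.one_mul, Matrix.mul_one]
    abel
  have hQ : Q.PosSemidef := by
    have : Qᴴ * Q = Q := by
      rw [Matrix.conjTranspose_eq_transpose_of_trivial, hQt, hQQ]
    rw [← this]
    exact Matrix.posSemidef_conjTranspose_mul_self Q
  have hsumB : ∑ i, (B *ᵥ u i) ⬝ᵥ (B *ᵥ u i) ≤ S₂.trace := by
    have h1 : ∀ i, (B *ᵥ u i) ⬝ᵥ (B *ᵥ u i) = u i ⬝ᵥ (S₂ *ᵥ u i) := by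
      intro i
      rw [stmt17_symm_shift hBt, Matrix.mulVec_mulVec, hBB]
    simp_rw [h1]
    have h2 := stmt17_sum_dot S₂ U
    simp_rw [hUcol] at h2
    rw [h2]
    have h3 : (Uᵀ * S₂ * U).trace = (S₂ * P).trace := by
      rw [Matrix.trace_mul_comm, ← Matrix.mul_assoc, hPdef, Matrix.trace_mul_comm]
    rw [h3]
    have h4 : S₂.trace - (S₂ * P).trace = (S₂ * Q).trace := by
      rw [hQdef, Matrix.mul_sub, Matrix.mul_one, Matrix.trace_sub]
    have h5 : 0 ≤ (S₂ * Q).trace := by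
      have h6 : (S₂ * Q).trace = (B * Q * B).trace := by
        rw [← hBB, Matrix.mul_assoc, Matrix.trace_mul_comm]
      rw [h6]
      refine stmt17_trace_nonneg ?_
      have := hQ.conjTranspose_mul_mul_same B
      rwa [Matrix.conjTranspose_eq_transpose_of_trivial, hBt] at this
    linarith
  have hmain : ∑ i, lam i ≤ (S₁.trace + S₂.trace) / 2 := by
    calc ∑ i, lam i ≤ ∑ i, ((A *ᵥ v i) ⬝ᵥ (A *ᵥ v i) + (B *ᵥ u i) ⬝ᵥ (B *ᵥ u i)) / 2 :=
          Finset.sum_le_sum fun i _ => key i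
      _ = (∑ i, (A *ᵥ v i) ⬝ᵥ (A *ᵥ v i) + ∑ i, (B *ᵥ u i) ⬝ᵥ (B *ᵥ u i)) / 2 := by
          rw [← Finset.sum_add_distrib, ← Finset.sum_div]
      _ ≤ (S₁.trace + S₂.trace) / 2 := by rw [hsumA]; linarith [hsumB]
  have htr : (S₁ + S₂ - 2 • T).trace = S₁.trace + S₂.trace - 2 * T.trace := by
    rw [Matrix.trace_sub, Matrix.trace_add, Matrix.trace_smul]
    simp [nsmul_eq_mul]
  constructor
  · rw [htr, htrT]; linarith
  · intro hS
    have hsq : S₁ ^ 2 = A * S₂ * A := by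
      rw [← hS, pow_two, ← hAA]
      simp only [Matrix.mul_assoc]
    have hTS : T = S₁ := (h₁.eq_sqrt_of_sq_eq hmid hsq).symm
    rw [htr, htrT, ← htrT, hTS, ← hS]
    ring
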